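/- Let s and t be coprime positive integers and n, m integers with 0 < n < s and 0 < m < t. For every τ ∈ ℂ with Im τ > 0 (writing q^x := exp(2πiτx)), the limit of q^{((ms)²+(nt)²)/(4st) − N/2} · 𝒥′_N(q) − ((3N² + 1)/4) · Φ_{s,t}^{(n,m)}(τ), as N → ∞ through odd positive integers, equals Σ_{k∈ℤ} k² ( q^{(2stk−nt−ms)²/(4st)} − q^{(2stk−nt+ms)²/(4st)} ). (The right-hand side is η(τ)·ch_q 𝒳_{n,m}^+, the character of the irreducible (s,t)-log VOA module 𝒳_{n,m}^+.) -/

import Mathlib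

open Complex Finset Filter

/-- `Q τ x = q^x = exp(2πiτx)` for real `x`. -/
noncomputable def Q (τ : ℂ) (x : ℝ) : ℂ := Complex.exp (2 * Real.pi * Complex.I * τ * x)

/-- The 2st-periodic function `χ_{2st}^{(n,m)}`. -/
def chi (s t n m k : ℤ) : ℤ :=
  if k ≡ n * t - m * s [ZMOD 2 * s * t] ∨ k ≡ -(n * t - m * s) [ZMOD 2 * s * t] then 1
  else if k ≡ n * t + m * s [ZMOD 2 * s * t] ∨ k ≡ -(n * t + m * s) [ZMOD 2 * s * t] then -1
  else 0

/-- The theta series `Φ_{s,t}^{(n,m)}(τ)`. -/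
noncomputable def Phi (s t n m : ℤ) (τ : ℂ) : ℂ :=
  (1 / 2) * ∑' k : ℤ, (chi s t n m k : ℂ) * Q τ ((k : ℝ) ^ 2 / (4 * s * t))

/-- The family `𝒥'_N(q; (n,m), 3s, 3t)` of colored Jones polynomials of `T_{3s,3t}`;
the inner index `r` runs over `-c/2, -c/2 + 1, …, c/2`, realized as `r = (2j - c)/2`
for `j = 0, 1, …, c`. -/
noncomputable def J' (s t n m : ℤ) (N : ℕ) (τ : ℂ) : ℂ :=
  (Q τ ((N : ℝ) / 2) - Q τ (-((N : ℝ) / 2)))⁻¹ *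
    ∑ b ∈ Finset.range N,
      ∑ c ∈ (Finset.Icc |2 * (b : ℤ) - N + 1| (2 * b + N - 1)).filter (fun c : ℤ => Odd (c + N)),
        ∑ j ∈ Finset.range (c.toNat + 1),
          (fun r : ℝ =>
            Q τ (((s * t : ℤ) : ℝ) * r ^ 2 - ((m * s + n * t : ℤ) : ℝ) * r
                + ((m * n : ℤ) : ℝ) / 2)
              - Q τ (((s * t : ℤ) : ℝ) * r ^ 2 - ((m * s - n * t : ℤ) : ℝ) * r
                - ((m * n : ℤ) : ℝ) / 2))
          (((2 * (j : ℤ) - c : ℤ) : ℝ) / 2)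

namespace St9

lemma Q_add (τ : ℂ) (x y : ℝ) : Q τ (x + y) = Q τ x * Q τ y := by
  rw [Q, Q, Q, ← Complex.exp_add]; congr 1; push_cast; ring

lemma Q_ne_zero (τ : ℂ) (x : ℝ) : Q τ x ≠ 0 := Complex.exp_ne_zero _

lemma Q_zero (τ : ℂ) : Q τ 0 = 1 := by simp [Q]

lemma norm_Q (τ : ℂ) (x : ℝ) : ‖Q τ x‖ = Real.exp (-(2 * Real.pi * τ.im * x)) := by
  rw [Q, Complex.norm_exp]
  congr 1
  simp [Complex.mul_re, Complex.mul_im]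
  try ring

lemma norm_Q_lt_one {τ : ℂ} (hτ : 0 < τ.im) {x : ℝ} (hx : 0 < x) : ‖Q τ x‖ < 1 := by
  rw [norm_Q, Real.exp_lt_one_iff]
  have h : 0 < 2 * Real.pi * τ.im * x := by positivity
  linarith

/-- Master Gaussian summability lemma. -/
lemma summable_gauss (c : ℝ) (hc : 0 < c) (α β : ℝ) (hα : α ≠ 0) :
    Summable fun r : ℤ => (1 + (r:ℝ)^2) * Real.exp (-(c * (α * r + β)^2)) := by
  have key : ∀ α' : ℝ, α' ≠ 0 →
      Summable fun n : ℕ => (1 + (n:ℝ)^2) * Real.exp (-(c * (α' * n + β)^2)) := by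
    intro a ha
    have hgeom : Summable fun n : ℕ => (1 + (n:ℝ)^2) * Real.exp (-1) ^ n := by
      have h1 : ‖Real.exp (-1)‖ < 1 := by
        rw [Real.norm_eq_abs, abs_of_pos (Real.exp_pos _), Real.exp_lt_one_iff]; norm_num
      have := (summable_geometric_of_norm_lt_one h1).add
        (summable_pow_mul_geometric_of_norm_lt_one 2 h1)
      simpa [add_mul] using this
    apply Summable.of_norm_bounded_eventually_nat hgeom
    have hap : 0 < |a| := abs_pos.mpr ha
    obtain ⟨n₀, hn₀⟩ := exists_nat_ge (max (2 * |β| / |a|) (4 / (c * |a|^2)))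
    filter_upwards [eventually_ge_atTop n₀] with n hn
    have hnn : (n₀ : ℝ) ≤ n := by exact_mod_cast hn
    have h1 : 2 * |β| / |a| ≤ n := le_trans (le_trans (le_max_left _ _) hn₀) hnn
    have h2 : 4 / (c * |a|^2) ≤ n := le_trans (le_trans (le_max_right _ _) hn₀) hnn
    have h1' : 2 * |β| ≤ |a| * n := by
      rw [div_le_iff₀ hap] at h1; linarith [h1]
    have h2' : 4 ≤ c * |a|^2 * n := by
      have : 0 < c * |a|^2 := by positivity
      rw [div_le_iff₀ this] at h2; linarith [h2]
    have habs : |a| * n - |β| ≤ |a * n + β| := by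
      have := abs_add_le (a * n + β) (-β)
      simp only [add_neg_cancel_right, abs_neg] at this
      have h3 : |a * n| = |a| * n := by
        rw [abs_mul, Nat.abs_cast]
      linarith
    have hnonneg : 0 ≤ |a| * n - |β| := by nlinarith [abs_nonneg β]
    have hsq : (|a| * n - |β|)^2 ≤ (a * n + β)^2 := by
      rw [← _root_.sq_abs (a * (n:ℝ) + β)]
      exact pow_le_pow_left₀ hnonneg habs 2
    have e1 : |a| * n / 2 ≤ |a| * n - |β| := by linarith
    have e2 : (|a| * (n:ℝ) / 2)^2 ≤ (|a| * n - |β|)^2 :=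
      pow_le_pow_left₀ (by positivity) e1 2
    have e3 : c * (|a| * (n:ℝ) / 2)^2 ≤ c * (a * n + β)^2 :=
      mul_le_mul_of_nonneg_left (e2.trans hsq) hc.le
    have e4 : (n:ℝ) ≤ c * (|a| * (n:ℝ) / 2)^2 := by
      nlinarith [mul_nonneg (sub_nonneg.mpr h2') (Nat.cast_nonneg (α := ℝ) n)]
    have hexp : (n:ℝ) ≤ c * (a * n + β)^2 := le_trans e4 e3
    have : Real.exp (-(c * (a * n + β)^2)) ≤ Real.exp (-1) ^ n := by
      rw [← Real.exp_nat_mul]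
      apply Real.exp_le_exp.2
      nlinarith
    have hpos : (0:ℝ) ≤ 1 + (n:ℝ)^2 := by positivity
    rw [Real.norm_eq_abs, _root_.abs_of_nonneg (by positivity : (0:ℝ) ≤ (1 + (n:ℝ)^2) * Real.exp (-(c * (a * ↑n + β)^2)))]
    exact mul_le_mul_of_nonneg_left this hpos
  apply Summable.of_nat_of_neg
  · simpa using key α hα
  · have := key (-α) (neg_ne_zero.mpr hα)
    apply this.congr
    intro n
    push_cast
    ring_nf


def W (M : ℕ) (r : ℤ) : ℕ :=
  ∑ b ∈ Finset.range (2*M+1), ((b:ℤ) + M + 1 - max |(b:ℤ) - M| |r|).toNat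

lemma comb (M : ℕ) (G : ℝ → ℂ) :
    (∑ b ∈ Finset.range (2*M+1),
      ∑ c ∈ (Finset.Icc |2*(b:ℤ) - ((2*M+1 : ℕ):ℤ) + 1| (2*(b:ℤ) + ((2*M+1:ℕ):ℤ) - 1)).filter
          (fun c : ℤ => Odd (c + ((2*M+1:ℕ):ℤ))),
        ∑ j ∈ Finset.range (c.toNat + 1), G (((2*(j:ℤ) - c : ℤ) : ℝ) / 2))
    = ∑ r ∈ Finset.Icc (-(3*(M:ℤ))) (3*(M:ℤ)), (W M r : ℂ) * G (r : ℝ) := by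
  have step1 : ∀ b ∈ Finset.range (2*M+1),
      (∑ c ∈ (Finset.Icc |2*(b:ℤ) - ((2*M+1 : ℕ):ℤ) + 1| (2*(b:ℤ) + ((2*M+1:ℕ):ℤ) - 1)).filter
          (fun c : ℤ => Odd (c + ((2*M+1:ℕ):ℤ))),
        ∑ j ∈ Finset.range (c.toNat + 1), G (((2*(j:ℤ) - c : ℤ) : ℝ) / 2))
      = ∑ d ∈ Finset.Icc |(b:ℤ) - M| ((b:ℤ) + M),
          ∑ ρ ∈ Finset.Icc (-d) d, G (ρ : ℝ) := by
    intro b hb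
    have hb' : b < 2*M+1 := Finset.mem_range.mp hb
    have hset : (Finset.Icc |2*(b:ℤ) - ((2*M+1 : ℕ):ℤ) + 1| (2*(b:ℤ) + ((2*M+1:ℕ):ℤ) - 1)).filter
          (fun c : ℤ => Odd (c + ((2*M+1:ℕ):ℤ)))
        = Finset.image (fun d : ℤ => 2*d) (Finset.Icc |(b:ℤ) - M| ((b:ℤ) + M)) := by
      ext c
      simp only [Finset.mem_filter, Finset.mem_Icc, Finset.mem_image, Int.odd_iff]
      push_cast
      simp only [Int.abs_eq_natAbs]
      constructor
      · intro h
        exact ⟨c/2, by omega, by omega⟩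
      · rintro ⟨d, hd, rfl⟩
        omega
    rw [hset, Finset.sum_image (by intro x _ y _ h; have h' : 2*x = 2*y := h; omega)]
    refine Finset.sum_congr rfl fun d hd => ?_
    have hd0 : 0 ≤ d := le_trans (abs_nonneg _) (Finset.mem_Icc.mp hd).1
    refine Finset.sum_nbij' (fun j => (j:ℤ) - d) (fun ρ => (ρ + d).toNat) ?_ ?_ ?_ ?_ ?_
    · intro j hj
      simp only [Finset.mem_range] at hj
      simp only [Finset.mem_Icc]
      omega
    · intro ρ hρ
      simp only [Finset.mem_Icc] at hρ
      simp only [Finset.mem_range]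
      omega
    · intro j hj; simp only [Finset.mem_range] at hj; omega
    · intro ρ hρ; simp only [Finset.mem_Icc] at hρ; omega
    · intro j hj
      congr 1
      have h2d : ((2*d : ℤ):ℝ) = 2*(d:ℝ) := by push_cast; ring
      push_cast
      ring
  rw [Finset.sum_congr rfl step1]
  have step2 : ∀ b ∈ Finset.range (2*M+1),
      (∑ d ∈ Finset.Icc |(b:ℤ) - M| ((b:ℤ) + M), ∑ ρ ∈ Finset.Icc (-d) d, G (ρ : ℝ))
      = ∑ ρ ∈ Finset.Icc (-(3*(M:ℤ))) (3*(M:ℤ)),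
          (((b:ℤ) + M + 1 - max |(b:ℤ) - M| |ρ|).toNat) • G (ρ : ℝ) := by
    intro b hb
    have hb' : b < 2*M+1 := Finset.mem_range.mp hb
    rw [Finset.sum_comm' (t' := Finset.Icc (-((b:ℤ) + M)) ((b:ℤ) + M))
        (s' := fun ρ => Finset.Icc (max |(b:ℤ) - M| |ρ|) ((b:ℤ) + M))
        (by intro d ρ; simp only [Finset.mem_Icc, Int.abs_eq_natAbs]; omega)]
    have inner : ∀ ρ : ℤ, (∑ _d ∈ Finset.Icc (max |(b:ℤ) - M| |ρ|) ((b:ℤ) + M), G (ρ:ℝ))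
        = (((b:ℤ) + M + 1 - max |(b:ℤ) - M| |ρ|).toNat) • G (ρ : ℝ) := by
      intro ρ
      rw [Finset.sum_const, Int.card_Icc]
    rw [Finset.sum_congr rfl (fun ρ _ => inner ρ)]
    refine Finset.sum_subset ?_ ?_
    · intro ρ hρ
      simp only [Finset.mem_Icc] at hρ ⊢
      omega
    · intro ρ _ hρ
      simp only [Finset.mem_Icc, not_and_or, not_le] at hρ
      have hz : ((b:ℤ) + M + 1 - max |(b:ℤ) - M| |ρ|).toNat = 0 := by
        simp only [Int.abs_eq_natAbs] at hρ ⊢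
        omega
      rw [hz, zero_smul]
  rw [Finset.sum_congr rfl step2, Finset.sum_comm]
  refine Finset.sum_congr rfl fun r _ => ?_
  rw [← Finset.sum_smul]
  have hW : (∑ b ∈ Finset.range (2*M+1), ((b:ℤ) + M + 1 - max |(b:ℤ) - M| |r|).toNat) = W M r := rfl
  rw [hW, nsmul_eq_mul]


lemma sum_odd (M : ℕ) : ∑ b ∈ Finset.range M, (2*b+1) = M^2 := by
  induction M with
  | zero => simp
  | succ M ih => rw [Finset.sum_range_succ, ih]; ring

lemma W_total (M : ℕ) :
    ∑ b ∈ Finset.range (2*M+1), ((b:ℤ) + M + 1 - |(b:ℤ) - M|).toNat = 3*M^2+3*M+1 := by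
  rw [← Finset.sum_range_add_sum_Ico _ (show M ≤ 2*M+1 by omega)]
  have h1 : ∑ b ∈ Finset.range M, ((b:ℤ) + M + 1 - |(b:ℤ) - M|).toNat
      = ∑ b ∈ Finset.range M, (2*b+1) := by
    refine Finset.sum_congr rfl fun b hb => ?_
    have := Finset.mem_range.mp hb
    simp only [Int.abs_eq_natAbs]
    omega
  have h2 : ∑ b ∈ Finset.Ico M (2*M+1), ((b:ℤ) + M + 1 - |(b:ℤ) - M|).toNat
      = ∑ _b ∈ Finset.Ico M (2*M+1), (2*M+1) := by
    refine Finset.sum_congr rfl fun b hb => ?_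
    have := Finset.mem_Ico.mp hb
    simp only [Int.abs_eq_natAbs]
    omega
  rw [h1, h2, sum_odd, Finset.sum_const, Nat.card_Ico, smul_eq_mul]
  have : 2*M+1 - M = M+1 := by omega
  rw [this]
  ring

lemma W_eq_zero (M : ℕ) (r : ℤ) (h : 3*(M:ℤ) < |r|) : W M r = 0 := by
  rw [W]
  refine Finset.sum_eq_zero fun b hb => ?_
  have := Finset.mem_range.mp hb
  simp only [Int.abs_eq_natAbs] at h ⊢
  omega

lemma TW (M : ℕ) (r : ℤ) : ((3*M^2+3*M+1 : ℕ) : ℤ) - W M r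
    = ∑ b ∈ Finset.range (2*M+1), (min ((b:ℤ)+M+1) (max |(b:ℤ)-M| |r|) - |(b:ℤ)-M|) := by
  rw [← W_total M, W, Nat.cast_sum, Nat.cast_sum, ← Finset.sum_sub_distrib]
  refine Finset.sum_congr rfl fun b hb => ?_
  have := Finset.mem_range.mp hb
  simp only [Int.abs_eq_natAbs]
  omega

lemma sum_tri_nat : ∀ p : ℕ, ∑ a ∈ Finset.Icc (1-(p:ℤ)) ((p:ℤ)-1), ((p:ℤ) - |a|) = (p:ℤ)^2 := by
  intro p
  induction p with
  | zero =>
    rw [show ((0:ℕ):ℤ) = 0 from rfl, Finset.Icc_eq_empty (by omega)]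
    simp
  | succ p ih =>
    rcases Nat.eq_zero_or_pos p with h0 | h0
    · subst h0
      norm_num
    · have hρ : (1:ℤ) ≤ (p:ℤ) := by exact_mod_cast h0
      push_cast
      set ρ : ℤ := (p:ℤ) with hρdef
      have hins : Finset.Icc (1-(ρ+1)) ((ρ+1)-1) = insert (-ρ) (insert ρ (Finset.Icc (1-ρ) (ρ-1))) := by
        ext a
        simp only [Finset.mem_insert, Finset.mem_Icc]
        omega
      have hm1 : (-ρ) ∉ insert ρ (Finset.Icc (1-ρ) (ρ-1)) := by
        simp only [Finset.mem_insert, Finset.mem_Icc]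
        omega
      have hm2 : ρ ∉ Finset.Icc (1-ρ) (ρ-1) := by
        simp only [Finset.mem_Icc]
        omega
      rw [hins, Finset.sum_insert hm1, Finset.sum_insert hm2]
      have hsplit : ∑ a ∈ Finset.Icc (1-ρ) (ρ-1), (ρ+1-|a|)
          = (∑ a ∈ Finset.Icc (1-ρ) (ρ-1), (ρ-|a|)) + ∑ _a ∈ Finset.Icc (1-ρ) (ρ-1), (1:ℤ) := by
        rw [← Finset.sum_add_distrib]
        exact Finset.sum_congr rfl fun a _ => by ring
      have ih' : ∑ a ∈ Finset.Icc (1-ρ) (ρ-1), (ρ-|a|) = ρ^2 := ih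
      rw [hsplit, ih', Finset.sum_const, Int.card_Icc, nsmul_eq_mul, mul_one,
        abs_neg, abs_of_pos (by omega : (0:ℤ) < ρ)]
      have hcard : ((ρ - 1 + 1 - (1-ρ)).toNat : ℤ) = 2*ρ - 1 := by omega
      rw [hcard]
      ring

lemma sum_tri (ρ : ℤ) (hρ : 0 ≤ ρ) : ∑ a ∈ Finset.Icc (1-ρ) (ρ-1), (ρ - |a|) = ρ^2 := by
  have := sum_tri_nat ρ.toNat
  rwa [Int.toNat_of_nonneg hρ] at this

lemma sum_max_le (M : ℕ) (ρ : ℤ) (hρ : 0 ≤ ρ) :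
    ∑ a ∈ Finset.Icc (-(M:ℤ)) M, max 0 (ρ - |a|) ≤ ρ^2 := by
  have e1 : ∑ a ∈ Finset.Icc (-(M:ℤ)) M, max 0 (ρ - |a|)
      = ∑ a ∈ Finset.Icc (-(M:ℤ)) M ∩ Finset.Icc (1-ρ) (ρ-1), max 0 (ρ - |a|) := by
    refine (Finset.sum_subset Finset.inter_subset_left fun a ha ha' => ?_).symm
    simp only [Finset.mem_inter, Finset.mem_Icc, not_and_or, not_le] at ha ha'
    simp only [Int.abs_eq_natAbs]
    omega
  rw [e1]
  calc ∑ a ∈ Finset.Icc (-(M:ℤ)) M ∩ Finset.Icc (1-ρ) (ρ-1), max 0 (ρ - |a|)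
      ≤ ∑ a ∈ Finset.Icc (1-ρ) (ρ-1), max 0 (ρ - |a|) :=
        Finset.sum_le_sum_of_subset_of_nonneg Finset.inter_subset_right
          (fun a _ _ => le_max_left _ _)
    _ = ∑ a ∈ Finset.Icc (1-ρ) (ρ-1), (ρ - |a|) := by
        refine Finset.sum_congr rfl fun a ha => ?_
        have := Finset.mem_Icc.mp ha
        simp only [Int.abs_eq_natAbs]
        omega
    _ = ρ^2 := sum_tri ρ hρ

lemma sum_max_eq (M : ℕ) (ρ : ℤ) (hρ : 0 ≤ ρ) (hρ' : ρ ≤ (M:ℤ)+1) :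
    ∑ a ∈ Finset.Icc (-(M:ℤ)) M, max 0 (ρ - |a|) = ρ^2 := by
  have e1 : ∑ a ∈ Finset.Icc (1-ρ) (ρ-1), max 0 (ρ - |a|)
      = ∑ a ∈ Finset.Icc (-(M:ℤ)) M, max 0 (ρ - |a|) := by
    refine Finset.sum_subset (fun a ha => ?_) (fun a ha ha' => ?_)
    · simp only [Finset.mem_Icc] at ha ⊢
      omega
    · simp only [Finset.mem_Icc, not_and_or, not_le] at ha ha'
      simp only [Int.abs_eq_natAbs]
      omega
  rw [← e1]
  rw [show ∑ a ∈ Finset.Icc (1-ρ) (ρ-1), max 0 (ρ - |a|) = ∑ a ∈ Finset.Icc (1-ρ) (ρ-1), (ρ - |a|) from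
    Finset.sum_congr rfl fun a ha => by
      have := Finset.mem_Icc.mp ha
      simp only [Int.abs_eq_natAbs]
      omega]
  exact sum_tri ρ hρ

lemma reindex (M : ℕ) (φ : ℤ → ℤ) :
    ∑ b ∈ Finset.range (2*M+1), φ ((b:ℤ)-M) = ∑ a ∈ Finset.Icc (-(M:ℤ)) M, φ a := by
  refine Finset.sum_nbij' (fun b => (b:ℤ) - M) (fun a => (a+M).toNat) ?_ ?_ ?_ ?_ ?_
  · intro b hb; have := Finset.mem_range.mp hb; simp only [Finset.mem_Icc]; omega
  · intro a ha; have := Finset.mem_Icc.mp ha; simp only [Finset.mem_range]; omega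
  · intro b hb; have := Finset.mem_range.mp hb; omega
  · intro a ha; have := Finset.mem_Icc.mp ha; omega
  · intro b _; rfl

lemma cN_nonneg (M : ℕ) (r : ℤ) : 0 ≤ ((3*M^2+3*M+1 : ℕ) : ℤ) - W M r := by
  rw [TW]
  refine Finset.sum_nonneg fun b hb => ?_
  have := Finset.mem_range.mp hb
  simp only [Int.abs_eq_natAbs]
  omega

lemma cN_le_sq (M : ℕ) (r : ℤ) : ((3*M^2+3*M+1 : ℕ) : ℤ) - W M r ≤ r^2 := by
  rw [TW]
  calc ∑ b ∈ Finset.range (2*M+1), (min ((b:ℤ)+M+1) (max |(b:ℤ)-M| |r|) - |(b:ℤ)-M|)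
      ≤ ∑ b ∈ Finset.range (2*M+1), max 0 (|r| - |(b:ℤ)-M|) := by
        refine Finset.sum_le_sum fun b hb => ?_
        have := Finset.mem_range.mp hb
        simp only [Int.abs_eq_natAbs]
        omega
    _ = ∑ a ∈ Finset.Icc (-(M:ℤ)) M, max 0 (|r| - |a|) := reindex M (fun a => max 0 (|r| - |a|))
    _ ≤ |r|^2 := sum_max_le M |r| (abs_nonneg r)
    _ = r^2 := _root_.sq_abs r

lemma cN_eq (M : ℕ) (r : ℤ) (h : |r| ≤ (M:ℤ)+1) :
    ((3*M^2+3*M+1 : ℕ) : ℤ) - W M r = r^2 := by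
  rw [TW]
  have e1 : ∑ b ∈ Finset.range (2*M+1), (min ((b:ℤ)+M+1) (max |(b:ℤ)-M| |r|) - |(b:ℤ)-M|)
      = ∑ b ∈ Finset.range (2*M+1), max 0 (|r| - |(b:ℤ)-M|) := by
    refine Finset.sum_congr rfl fun b hb => ?_
    have := Finset.mem_range.mp hb
    simp only [Int.abs_eq_natAbs] at h ⊢
    omega
  rw [e1, reindex M (fun a => max 0 (|r| - |a|)), sum_max_eq M |r| (abs_nonneg r) h, _root_.sq_abs]


noncomputable def QE (s t : ℤ) (τ : ℂ) (e k : ℤ) : ℂ :=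
  Q τ (((2*s*t*k + e : ℤ) : ℝ)^2 / (4*(s:ℝ)*(t:ℝ)))

lemma notModEq {N a b : ℤ} (hab : a ≠ b) (h : |a - b| < N) : ¬ a ≡ b [ZMOD N] := by
  intro hm
  have hd : N ∣ b - a := Int.ModEq.dvd hm
  have hne : b - a ≠ 0 := fun hh => hab (by omega)
  have h2 := Int.le_of_dvd (abs_pos.mpr hne) ((dvd_abs _ _).mpr hd)
  rw [abs_sub_comm] at h2
  omega

section main
variable {s t n m : ℤ} {τ : ℂ}

lemma base_facts (hs : 0 < s) (ht : 0 < t) (hst : IsCoprime s t)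
    (hn : 0 < n) (hns : n < s) (hm : 0 < m) (hmt : m < t) :
    0 < m*s ∧ m*s < s*t ∧ 0 < n*t ∧ n*t < s*t ∧ n*t ≠ m*s ∧ n*t + m*s ≠ s*t := by
  have h1 : 0 < m*s := mul_pos hm hs
  have h2 : m*s < s*t := by nlinarith
  have h3 : 0 < n*t := mul_pos hn ht
  have h4 : n*t < s*t := by nlinarith
  have key : ∀ x : ℤ, n*t = s*x → False := by
    intro x hx
    have hdvd : s ∣ n*t := ⟨x, hx⟩
    have hdn : s ∣ n := hst.dvd_of_dvd_mul_right hdvd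
    have := Int.le_of_dvd hn hdn
    omega
  refine ⟨h1, h2, h3, h4, fun h => key m (by linear_combination h), fun h => key (t - m) (by linear_combination h)⟩

/-- norm of the basic Gaussian term -/
lemma norm_Q_sq (hs : 0 < s) (ht : 0 < t) (hτ : 0 < τ.im) (x : ℝ) :
    ‖Q τ (x^2 / (4*(s:ℝ)*(t:ℝ)))‖
      = Real.exp (-((2 * Real.pi * τ.im / (4*(s:ℝ)*(t:ℝ))) * x^2)) := by
  rw [norm_Q]
  congr 1
  have hst : (0:ℝ) < 4*(s:ℝ)*(t:ℝ) := by
    have : (0:ℝ) < (s:ℝ) := by exact_mod_cast hs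
    have : (0:ℝ) < (t:ℝ) := by exact_mod_cast ht
    positivity
  field_simp

lemma summable_QE_aux (hs : 0 < s) (ht : 0 < t) (hτ : 0 < τ.im) (e : ℤ) :
    Summable fun k : ℤ => (1 + (k:ℝ)^2) * ‖QE s t τ e k‖ := by
  have hst : (0:ℝ) < 4*(s:ℝ)*(t:ℝ) := by
    have h1 : (0:ℝ) < (s:ℝ) := by exact_mod_cast hs
    have h2 : (0:ℝ) < (t:ℝ) := by exact_mod_cast ht
    positivity
  have hc : 0 < 2 * Real.pi * τ.im / (4*(s:ℝ)*(t:ℝ)) := by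
    have := Real.pi_pos
    positivity
  have hα : (2*(s:ℝ)*(t:ℝ)) ≠ 0 := by positivity
  refine (summable_gauss _ hc (2*(s:ℝ)*(t:ℝ)) (e:ℝ) hα).congr fun k => ?_
  rw [QE, norm_Q_sq hs ht hτ]
  congr 2
  push_cast
  ring

lemma summable_QE (hs : 0 < s) (ht : 0 < t) (hτ : 0 < τ.im) (e : ℤ) :
    Summable fun k : ℤ => QE s t τ e k := by
  refine Summable.of_norm (Summable.of_nonneg_of_le (fun k => norm_nonneg _)
    (fun k => ?_) (summable_QE_aux hs ht hτ e))
  have : (1:ℝ) ≤ 1 + (k:ℝ)^2 := by nlinarith [sq_nonneg ((k:ℝ))]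
  nlinarith [norm_nonneg (QE s t τ e k)]

lemma summable_sq_QE (hs : 0 < s) (ht : 0 < t) (hτ : 0 < τ.im) (e : ℤ) :
    Summable fun k : ℤ => (k:ℂ)^2 * QE s t τ e k := by
  refine Summable.of_norm (Summable.of_nonneg_of_le (fun k => norm_nonneg _)
    (fun k => ?_) (summable_QE_aux hs ht hτ e))
  rw [norm_mul]
  have h1 : ‖(k:ℂ)^2‖ = (k:ℝ)^2 := by
    rw [norm_pow]
    norm_num [Complex.norm_intCast]
  rw [h1]
  nlinarith [norm_nonneg (QE s t τ e k), sq_nonneg ((k:ℝ))]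

lemma QE_neg_arg (e r : ℤ) : QE s t τ e (-r) = QE s t τ (-e) r := by
  rw [QE, QE]
  congr 2
  push_cast
  ring

lemma tsum_QE_neg (e : ℤ) : ∑' r : ℤ, QE s t τ e r = ∑' r : ℤ, QE s t τ (-e) r := by
  rw [← (Equiv.neg ℤ).tsum_eq (QE s t τ e)]
  exact tsum_congr fun r => QE_neg_arg e r

lemma tsum_sq_QE_neg (e : ℤ) :
    ∑' r : ℤ, (r:ℂ)^2 * QE s t τ e r = ∑' r : ℤ, (r:ℂ)^2 * QE s t τ (-e) r := by
  rw [← (Equiv.neg ℤ).tsum_eq (fun r => (r:ℂ)^2 * QE s t τ e r)]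
  refine tsum_congr fun r => ?_
  simp only [Equiv.neg_apply]
  rw [QE_neg_arg e r]
  push_cast
  ring

/-- the indicator summand -/
noncomputable def ind (s t : ℤ) (τ : ℂ) (e k : ℤ) : ℂ :=
  if k ≡ e [ZMOD 2*s*t] then Q τ ((k : ℝ)^2 / (4*(s:ℝ)*(t:ℝ))) else 0

lemma tsum_ind (hs : 0 < s) (ht : 0 < t) (e : ℤ) :
    ∑' k : ℤ, ind s t τ e k = ∑' r : ℤ, QE s t τ e r := by
  have hne : (2*s*t : ℤ) ≠ 0 := by positivity
  refine tsum_eq_tsum_of_ne_zero_bij (fun r => 2*s*t*(r:ℤ) + e) ?_ ?_ ?_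
  · intro x y h
    have h' : 2*s*t*((x:ℤ):ℤ) = 2*s*t*((y:ℤ):ℤ) := by
      dsimp only at h
      linarith
    exact Subtype.ext (mul_left_cancel₀ hne h')
  · intro k hk
    rw [Function.mem_support] at hk
    have hc : k ≡ e [ZMOD 2*s*t] := by
      by_contra hc
      exact hk (by rw [ind, if_neg hc])
    obtain ⟨r, hr⟩ := Int.ModEq.dvd hc
    refine ⟨⟨-r, ?_⟩, ?_⟩
    · rw [Function.mem_support, QE]
      exact Q_ne_zero τ _
    · dsimp only
      push_cast
      linarith
  · intro x
    have hmod : (2*s*t*((x:ℤ)) + e) ≡ e [ZMOD 2*s*t] :=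
      (Int.modEq_iff_dvd.mpr ⟨-((x:ℤ)), by ring⟩)
    simp only [ind, if_pos hmod, QE]

lemma summable_ind (hs : 0 < s) (ht : 0 < t) (hτ : 0 < τ.im) (e : ℤ) :
    Summable fun k : ℤ => ind s t τ e k := by
  have hst : (0:ℝ) < 4*(s:ℝ)*(t:ℝ) := by
    have h1 : (0:ℝ) < (s:ℝ) := by exact_mod_cast hs
    have h2 : (0:ℝ) < (t:ℝ) := by exact_mod_cast ht
    positivity
  have hc : 0 < 2 * Real.pi * τ.im / (4*(s:ℝ)*(t:ℝ)) := by
    have := Real.pi_pos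
    positivity
  have hbase : Summable fun k : ℤ => (1 + (k:ℝ)^2) * Real.exp
      (-((2 * Real.pi * τ.im / (4*(s:ℝ)*(t:ℝ))) * ((k:ℝ))^2)) := by
    refine (summable_gauss _ hc 1 0 one_ne_zero).congr fun k => ?_
    norm_num
  refine Summable.of_norm (Summable.of_nonneg_of_le (fun k => norm_nonneg _)
    (fun k => ?_) hbase)
  have hle : ‖ind s t τ e k‖ ≤ Real.exp
      (-((2 * Real.pi * τ.im / (4*(s:ℝ)*(t:ℝ))) * ((k:ℝ))^2)) := by
    rw [ind]
    split
    · rw [norm_Q_sq hs ht hτ]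
    · simp [Real.exp_nonneg]
  have h1 : (1:ℝ) ≤ 1 + (k:ℝ)^2 := by nlinarith [sq_nonneg ((k:ℝ))]
  nlinarith [norm_nonneg (ind s t τ e k), Real.exp_nonneg
    (-((2 * Real.pi * τ.im / (4*(s:ℝ)*(t:ℝ))) * ((k:ℝ))^2))]

lemma chi_mul_split (hs : 0 < s) (ht : 0 < t) (hst : IsCoprime s t)
    (hn : 0 < n) (hns : n < s) (hm : 0 < m) (hmt : m < t) (k : ℤ) :
    (chi s t n m k : ℂ) * Q τ ((k : ℝ)^2 / (4*(s:ℝ)*(t:ℝ)))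
      = ind s t τ (n*t - m*s) k + ind s t τ (-(n*t - m*s)) k
        - ind s t τ (n*t + m*s) k - ind s t τ (-(n*t + m*s)) k := by
  obtain ⟨h1, h2, h3, h4, h5, h6⟩ := base_facts hs ht hst hn hns hm hmt
  set A := n*t - m*s with hA
  set B := n*t + m*s with hB
  have hst0 : 0 < s*t := mul_pos hs ht
  have habs : ∀ x y : ℤ, x ≠ y → |x - y| < 2*s*t → ∀ (h : k ≡ x [ZMOD 2*s*t]), ¬ k ≡ y [ZMOD 2*s*t] :=
    fun x y hxy hlt h hy => notModEq hxy hlt (h.symm.trans hy)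
  have nAB : A ≠ B ∧ |A - B| < 2*s*t := by
    constructor
    · omega
    · simp only [Int.abs_eq_natAbs]
      rw [show (2*s*t:ℤ) = 2*(s*t) from by ring]
      omega
  have nAmB : A ≠ -B ∧ |A - -B| < 2*s*t := by
    constructor
    · omega
    · simp only [Int.abs_eq_natAbs]
      rw [show (2*s*t:ℤ) = 2*(s*t) from by ring]
      omega
  have nAmA : A ≠ -A ∧ |A - -A| < 2*s*t := by
    constructor
    · omega
    · simp only [Int.abs_eq_natAbs]
      rw [show (2*s*t:ℤ) = 2*(s*t) from by ring]
      omega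
  have nmAB : -A ≠ B ∧ |-A - B| < 2*s*t := by
    constructor
    · omega
    · simp only [Int.abs_eq_natAbs]
      rw [show (2*s*t:ℤ) = 2*(s*t) from by ring]
      omega
  have nmAmB : -A ≠ -B ∧ |-A - -B| < 2*s*t := by
    constructor
    · omega
    · simp only [Int.abs_eq_natAbs]
      rw [show (2*s*t:ℤ) = 2*(s*t) from by ring]
      omega
  have nBB : ∀ (h : k ≡ B [ZMOD 2*s*t]), ¬ k ≡ -B [ZMOD 2*s*t] := by
    intro hk hk'
    have hmm : B ≡ -B [ZMOD 2*s*t] := hk.symm.trans hk'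
    obtain ⟨c, hc⟩ := Int.ModEq.dvd hmm
    have hBst : B = (s*t) * (-c) := by linarith
    have hBpos : 0 < B := by omega
    have hBlt : B < 2*(s*t) := by omega
    have hw1 : 1 ≤ -c := by
      by_contra hcon
      push_neg at hcon
      have : (s*t) * (-c) ≤ 0 := mul_nonpos_of_nonneg_of_nonpos hst0.le (by omega)
      linarith
    have hw2 : -c ≤ 1 := by
      by_contra hcon
      push_neg at hcon
      have h2c : (2:ℤ) ≤ -c := by omega
      have := mul_le_mul_of_nonneg_left h2c hst0.le
      linarith
    have hc1 : -c = 1 := le_antisymm hw2 hw1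
    rw [hc1, mul_one] at hBst
    exact h6 hBst
  rw [chi]
  by_cases c1 : k ≡ A [ZMOD 2*s*t] ∨ k ≡ -A [ZMOD 2*s*t]
  · rw [if_pos c1]
    rcases c1 with hk | hk
    · have e1 : ¬ k ≡ -A [ZMOD 2*s*t] := habs A (-A) nAmA.1 nAmA.2 hk
      have e2 : ¬ k ≡ B [ZMOD 2*s*t] := habs A B nAB.1 nAB.2 hk
      have e3 : ¬ k ≡ -B [ZMOD 2*s*t] := habs A (-B) nAmB.1 nAmB.2 hk
      simp only [ind, if_pos hk, if_neg e1, if_neg e2, if_neg e3]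
      push_cast
      ring
    · have e1 : ¬ k ≡ A [ZMOD 2*s*t] := habs (-A) A (Ne.symm nAmA.1) (by rw [abs_sub_comm]; exact nAmA.2) hk
      have e2 : ¬ k ≡ B [ZMOD 2*s*t] := habs (-A) B nmAB.1 nmAB.2 hk
      have e3 : ¬ k ≡ -B [ZMOD 2*s*t] := habs (-A) (-B) nmAmB.1 nmAmB.2 hk
      simp only [ind, if_pos hk, if_neg e1, if_neg e2, if_neg e3]
      push_cast
      ring
  · rw [if_neg c1]
    push_neg at c1
    by_cases c2 : k ≡ B [ZMOD 2*s*t] ∨ k ≡ -B [ZMOD 2*s*t]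
    · rw [if_pos c2]
      rcases c2 with hk | hk
      · have e1 : ¬ k ≡ -B [ZMOD 2*s*t] := nBB hk
        simp only [ind, if_pos hk, if_neg e1, if_neg c1.1, if_neg c1.2]
        push_cast
        ring
      · have e1 : ¬ k ≡ B [ZMOD 2*s*t] := fun hk' => nBB hk' hk
        simp only [ind, if_pos hk, if_neg e1, if_neg c1.1, if_neg c1.2]
        push_cast
        ring
    · rw [if_neg c2]
      push_neg at c2
      simp only [ind, if_neg c1.1, if_neg c1.2, if_neg c2.1, if_neg c2.2]
      norm_num

lemma Phi_eq (hs : 0 < s) (ht : 0 < t) (hst : IsCoprime s t)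
    (hn : 0 < n) (hns : n < s) (hm : 0 < m) (hmt : m < t) (hτ : 0 < τ.im) :
    Phi s t n m τ
      = (∑' r : ℤ, QE s t τ (n*t - m*s) r) - ∑' r : ℤ, QE s t τ (n*t + m*s) r := by
  have hne : (2*s*t : ℤ) ≠ 0 := by positivity
  rw [Phi]
  have hb : ∀ k : ℤ, (chi s t n m k : ℂ) * Q τ ((k : ℝ)^2 / (4 * (s:ℝ) * (t:ℝ)))
      = ind s t τ (n*t - m*s) k + ind s t τ (-(n*t - m*s)) k
        - ind s t τ (n*t + m*s) k - ind s t τ (-(n*t + m*s)) k :=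
    chi_mul_split hs ht hst hn hns hm hmt
  rw [tsum_congr hb]
  have s1 := summable_ind (τ := τ) hs ht hτ (n*t - m*s)
  have s2 := summable_ind (τ := τ) hs ht hτ (-(n*t - m*s))
  have s3 := summable_ind (τ := τ) hs ht hτ (n*t + m*s)
  have s4 := summable_ind (τ := τ) hs ht hτ (-(n*t + m*s))
  rw [Summable.tsum_sub (((s1.add s2).sub s3)) s4, Summable.tsum_sub (s1.add s2) s3, Summable.tsum_add s1 s2,
    tsum_ind hs ht, tsum_ind hs ht, tsum_ind hs ht, tsum_ind hs ht]
  have e2 : ∑' r : ℤ, QE s t τ (-(n*t - m*s)) r = ∑' r : ℤ, QE s t τ (n*t - m*s) r := by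
    rw [tsum_QE_neg (-(n*t - m*s)), neg_neg]
  have e4 : ∑' r : ℤ, QE s t τ (-(n*t + m*s)) r = ∑' r : ℤ, QE s t τ (n*t + m*s) r := by
    rw [tsum_QE_neg (-(n*t + m*s)), neg_neg]
  rw [e2, e4]
  ring

end main

lemma Q_nat_pow (τ : ℂ) (n : ℕ) : Q τ (n : ℝ) = (Q τ 1) ^ n := by
  induction n with
  | zero => simpa using Q_zero τ
  | succ n ih =>
    have : ((n+1 : ℕ) : ℝ) = (n:ℝ) + 1 := by push_cast; ring
    rw [this, Q_add, ih, pow_succ]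


end St9

open St9 in
theorem statement9 (s t n m : ℤ) (hs : 0 < s) (ht : 0 < t) (hst : IsCoprime s t)
    (hn : 0 < n) (hns : n < s) (hm : 0 < m) (hmt : m < t)
    (τ : ℂ) (hτ : 0 < τ.im) :
    Tendsto (fun k : ℕ =>
        Q τ ((((m * s) ^ 2 + (n * t) ^ 2 : ℤ) : ℝ) / (4 * s * t) - ((2 * k + 1 : ℕ) : ℝ) / 2)
            * J' s t n m (2 * k + 1) τ
          - ((3 * ((2 * k + 1 : ℕ) : ℂ) ^ 2 + 1) / 4) * Phi s t n m τ)
      atTop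
      (nhds (∑' k : ℤ, (k : ℂ) ^ 2 *
        (Q τ (((2 * s * t * k - n * t - m * s : ℤ) : ℝ) ^ 2 / (4 * s * t))
          - Q τ (((2 * s * t * k - n * t + m * s : ℤ) : ℝ) ^ 2 / (4 * s * t))))) := by
  have hsR : (0:ℝ) < (s:ℝ) := by exact_mod_cast hs
  have htR : (0:ℝ) < (t:ℝ) := by exact_mod_cast ht
  set A : ℤ := n*t - m*s with hA
  set B : ℤ := n*t + m*s with hB
  -- ψ
  set ψ : ℤ → ℂ := fun r => QE s t τ (-B) r - QE s t τ A r with hψ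
  have hsumψ : Summable ψ := (summable_QE hs ht hτ (-B)).sub (summable_QE hs ht hτ A)
  have hsum_sqψ : Summable fun r : ℤ => (r:ℂ)^2 * ψ r := by
    have := (summable_sq_QE hs ht hτ (-B)).sub (summable_sq_QE hs ht hτ A)
    refine this.congr fun r => ?_
    simp only [hψ]
    ring
  -- ∑ ψ = -Φ
  have htsumψ : ∑' r : ℤ, ψ r = - Phi s t n m τ := by
    rw [hψ, Summable.tsum_sub (summable_QE hs ht hτ (-B)) (summable_QE hs ht hτ A),
      Phi_eq hs ht hst hn hns hm hmt hτ, tsum_QE_neg (-B), neg_neg]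
    rw [← hA, ← hB]
    ring_nf
  -- the limit L
  set L : ℂ := ∑' r : ℤ, (r:ℂ)^2 * ψ r with hL
  -- identify the claimed limit with L
  have hRHS : (∑' k : ℤ, (k : ℂ) ^ 2 *
        (Q τ (((2 * s * t * k - n * t - m * s : ℤ) : ℝ) ^ 2 / (4 * s * t))
          - Q τ (((2 * s * t * k - n * t + m * s : ℤ) : ℝ) ^ 2 / (4 * s * t)))) = L := by
    have e1 : ∀ k : ℤ, Q τ (((2 * s * t * k - n * t - m * s : ℤ) : ℝ) ^ 2 / (4 * (s:ℝ) * (t:ℝ)))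
        = QE s t τ (-B) k := by
      intro k
      rw [QE]
      congr 1
      push_cast [hB, hA]
      ring
    have e2 : ∀ k : ℤ, Q τ (((2 * s * t * k - n * t + m * s : ℤ) : ℝ) ^ 2 / (4 * (s:ℝ) * (t:ℝ)))
        = QE s t τ (-A) k := by
      intro k
      rw [QE]
      congr 1
      push_cast [hB, hA]
      ring
    calc ∑' k : ℤ, (k : ℂ) ^ 2 *
          (Q τ (((2 * s * t * k - n * t - m * s : ℤ) : ℝ) ^ 2 / (4 * (s:ℝ) * (t:ℝ)))
          - Q τ (((2 * s * t * k - n * t + m * s : ℤ) : ℝ) ^ 2 / (4 * (s:ℝ) * (t:ℝ))))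
        = ∑' k : ℤ, ((k : ℂ)^2 * QE s t τ (-B) k - (k:ℂ)^2 * QE s t τ (-A) k) := by
          refine tsum_congr fun k => ?_
          rw [e1 k, e2 k]
          ring
      _ = (∑' k : ℤ, (k : ℂ)^2 * QE s t τ (-B) k) - ∑' k : ℤ, (k:ℂ)^2 * QE s t τ (-A) k :=
          Summable.tsum_sub (summable_sq_QE hs ht hτ (-B)) (summable_sq_QE hs ht hτ (-A))
      _ = (∑' k : ℤ, (k : ℂ)^2 * QE s t τ (-B) k) - ∑' k : ℤ, (k:ℂ)^2 * QE s t τ A k := by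
          rw [tsum_sq_QE_neg (-A), neg_neg]
      _ = L := by
          rw [hL, ← Summable.tsum_sub (summable_sq_QE hs ht hτ (-B)) (summable_sq_QE hs ht hτ A)]
          refine tsum_congr fun k => ?_
          simp only [hψ]
          ring
  rw [hRHS]
  -- notation for the per-k objects
  set cN : ℕ → ℤ → ℤ := fun k r => ((3*k^2+3*k+1 : ℕ) : ℤ) - W k r with hcN
  set Sc : ℕ → ℂ := fun k => ∑' r : ℤ, ((cN k r : ℤ) : ℂ) * ψ r with hSc
  set QN : ℕ → ℂ := fun k => Q τ (((2*k+1 : ℕ) : ℝ)) with hQN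
  -- summability of the cN-weighted series, with uniform bound
  have cN_nonneg' : ∀ (k:ℕ) (r:ℤ), 0 ≤ cN k r := fun k r => by
    simp only [hcN]; exact cN_nonneg k r
  have cN_le_sq' : ∀ (k:ℕ) (r:ℤ), cN k r ≤ r^2 := fun k r => by
    simp only [hcN]; exact cN_le_sq k r
  have cN_eq' : ∀ (k:ℕ) (r:ℤ), |r| ≤ (k:ℤ)+1 → cN k r = r^2 := fun k r h => by
    simp only [hcN]; exact cN_eq k r h
  have hb2 : Summable fun r : ℤ => (1 + (r:ℝ)^2) * (‖QE s t τ (-B) r‖ + ‖QE s t τ A r‖) := by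
    refine ((summable_QE_aux hs ht hτ (-B)).add (summable_QE_aux hs ht hτ A)).congr fun r => ?_
    ring
  have hbound : Summable fun r : ℤ => (r:ℝ)^2 * (‖QE s t τ (-B) r‖ + ‖QE s t τ A r‖) := by
    refine Summable.of_nonneg_of_le (fun r => by positivity) (fun r => ?_) hb2
    have h2 : (0:ℝ) ≤ ‖QE s t τ (-B) r‖ + ‖QE s t τ A r‖ := by positivity
    nlinarith [sq_nonneg ((r:ℝ))]
  have hnormle : ∀ (k : ℕ) (r : ℤ), ‖((cN k r : ℤ) : ℂ) * ψ r‖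
      ≤ (r:ℝ)^2 * (‖QE s t τ (-B) r‖ + ‖QE s t τ A r‖) := by
    intro k r
    rw [norm_mul]
    have hc1 : ‖((cN k r : ℤ) : ℂ)‖ = |((cN k r : ℤ) : ℝ)| := by
      exact_mod_cast Complex.norm_intCast (cN k r)
    have hc2 : |((cN k r : ℤ) : ℝ)| ≤ (r:ℝ)^2 := by
      have h1' : (0:ℝ) ≤ ((cN k r : ℤ) : ℝ) := by exact_mod_cast cN_nonneg' k r
      rw [_root_.abs_of_nonneg h1']
      exact_mod_cast cN_le_sq' k r
    have hψle : ‖ψ r‖ ≤ ‖QE s t τ (-B) r‖ + ‖QE s t τ A r‖ := norm_sub_le _ _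
    rw [hc1]
    exact mul_le_mul hc2 hψle (norm_nonneg _) (sq_nonneg _)
  have hsumSc : ∀ k : ℕ, Summable fun r : ℤ => ((cN k r : ℤ) : ℂ) * ψ r := fun k =>
    Summable.of_norm_bounded hbound (hnormle k)
  -- the key algebraic identity
  have key : ∀ k : ℕ,
      Q τ ((((m * s) ^ 2 + (n * t) ^ 2 : ℤ) : ℝ) / (4 * (s:ℝ) * (t:ℝ)) - ((2 * k + 1 : ℕ) : ℝ) / 2)
            * J' s t n m (2 * k + 1) τ
          - ((3 * ((2 * k + 1 : ℕ) : ℂ) ^ 2 + 1) / 4) * Phi s t n m τ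
        = (QN k - 1)⁻¹ * (-(Sc k) - ((3*k^2+3*k+1 : ℕ) : ℂ) * QN k * Phi s t n m τ) := by
    intro k
    set Pr : ℝ := (((m * s) ^ 2 + (n * t) ^ 2 : ℤ) : ℝ) / (4 * (s:ℝ) * (t:ℝ)) with hPr
    set G : ℝ → ℂ := fun r : ℝ =>
            Q τ (((s * t : ℤ) : ℝ) * r ^ 2 - ((m * s + n * t : ℤ) : ℝ) * r
                + ((m * n : ℤ) : ℝ) / 2)
              - Q τ (((s * t : ℤ) : ℝ) * r ^ 2 - ((m * s - n * t : ℤ) : ℝ) * r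
                - ((m * n : ℤ) : ℝ) / 2) with hG
    have hGr : ∀ r : ℤ, G (r : ℝ) = Q τ (-Pr) * ψ r := by
      intro r
      have hg1 : Q τ (((s * t : ℤ) : ℝ) * (r:ℝ) ^ 2 - ((m * s + n * t : ℤ) : ℝ) * (r:ℝ)
            + ((m * n : ℤ) : ℝ) / 2) = Q τ (-Pr) * QE s t τ (-B) r := by
        rw [QE, ← Q_add]
        congr 1
        rw [hPr]
        push_cast [hB]
        field_simp
        ring
      have hg2 : Q τ (((s * t : ℤ) : ℝ) * (r:ℝ) ^ 2 - ((m * s - n * t : ℤ) : ℝ) * (r:ℝ)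
            - ((m * n : ℤ) : ℝ) / 2) = Q τ (-Pr) * QE s t τ A r := by
        rw [QE, ← Q_add]
        congr 1
        rw [hPr]
        push_cast [hA]
        field_simp
        ring
      rw [hG]
      dsimp only
      rw [hg1, hg2, hψ]
      ring
    -- rewrite J'
    have hJ : J' s t n m (2*k+1) τ = (Q τ (((2*k+1:ℕ) : ℝ) / 2) - Q τ (-(((2*k+1:ℕ) : ℝ) / 2)))⁻¹ *
        ∑ r ∈ Finset.Icc (-(3*(k:ℤ))) (3*(k:ℤ)), (W k r : ℂ) * G (r : ℝ) := by
      rw [J', ← comb k G]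
    have hXk : ∑ r ∈ Finset.Icc (-(3*(k:ℤ))) (3*(k:ℤ)), (W k r : ℂ) * G (r : ℝ)
        = Q τ (-Pr) * (-(((3*k^2+3*k+1 : ℕ) : ℂ)) * Phi s t n m τ - Sc k) := by
      have e1 : ∑ r ∈ Finset.Icc (-(3*(k:ℤ))) (3*(k:ℤ)), (W k r : ℂ) * G (r : ℝ)
          = Q τ (-Pr) * ∑ r ∈ Finset.Icc (-(3*(k:ℤ))) (3*(k:ℤ)), (W k r : ℂ) * ψ r := by
        rw [Finset.mul_sum]
        refine Finset.sum_congr rfl fun r _ => ?_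
        rw [hGr r]
        ring
      have e2 : ∑ r ∈ Finset.Icc (-(3*(k:ℤ))) (3*(k:ℤ)), (W k r : ℂ) * ψ r
          = ∑' r : ℤ, (W k r : ℂ) * ψ r := by
        refine (tsum_eq_sum fun r hr => ?_).symm
        have : 3*(k:ℤ) < |r| := by
          simp only [Finset.mem_Icc, not_and_or, not_le, id_eq] at hr
          simp only [Int.abs_eq_natAbs, id_eq]
          omega
        rw [W_eq_zero k r this]
        simp
      have e3 : ∑' r : ℤ, (W k r : ℂ) * ψ r
          = -(((3*k^2+3*k+1 : ℕ) : ℂ)) * Phi s t n m τ - Sc k := by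
        have hWc : ∀ r : ℤ, (W k r : ℂ) * ψ r
            = ((3*k^2+3*k+1 : ℕ) : ℂ) * ψ r - ((cN k r : ℤ) : ℂ) * ψ r := by
          intro r
          have : (W k r : ℂ) = ((3*k^2+3*k+1 : ℕ) : ℂ) - ((cN k r : ℤ) : ℂ) := by
            rw [hcN]
            push_cast
            ring
          rw [this]
          ring
        rw [tsum_congr hWc, Summable.tsum_sub (hsumψ.mul_left _) (hsumSc k), tsum_mul_left, htsumψ,
          hSc]
        ring
      rw [e1, e2, e3]
    -- assemble
    have hNpos : (0:ℝ) < ((2*k+1 : ℕ):ℝ) := by positivity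
    have hQNk : QN k = Q τ (((2*k+1 : ℕ) : ℝ)) := rfl
    have hQN1 : QN k - 1 ≠ 0 := by
      rw [sub_ne_zero, hQNk]
      intro h
      have hlt := norm_Q_lt_one hτ hNpos
      rw [h] at hlt
      simp at hlt
    have hQd : Q τ (((2*k+1:ℕ) : ℝ) / 2) - Q τ (-(((2*k+1:ℕ) : ℝ) / 2))
        = Q τ (-(((2*k+1:ℕ) : ℝ) / 2)) * (QN k - 1) := by
      rw [hQNk, mul_sub, mul_one, ← Q_add]
      congr 2
      ring
    have hQQ : Q τ (Pr - ((2 * k + 1 : ℕ) : ℝ) / 2) * Q τ (-Pr)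
        = Q τ (-(((2*k+1:ℕ) : ℝ) / 2)) := by
      rw [← Q_add]
      congr 1
      ring
    rw [hJ, hXk, hQd]
    have hcoef : ((3 * ((2 * k + 1 : ℕ) : ℂ) ^ 2 + 1) / 4) = ((3*k^2+3*k+1 : ℕ) : ℂ) := by
      push_cast
      ring
    rw [hcoef]
    have hQnz1 : Q τ (-(((2*k+1:ℕ) : ℝ) / 2)) ≠ 0 := Q_ne_zero τ _
    have hQnz2 : Q τ (-Pr) ≠ 0 := Q_ne_zero τ _
    have expand : Q τ (Pr - ((2 * k + 1 : ℕ) : ℝ) / 2)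
        * ((Q τ (-(((2*k+1:ℕ) : ℝ) / 2)) * (QN k - 1))⁻¹
          * (Q τ (-Pr) * (-(((3*k^2+3*k+1 : ℕ) : ℂ)) * Phi s t n m τ - Sc k)))
        = (QN k - 1)⁻¹ * (-(((3*k^2+3*k+1 : ℕ) : ℂ)) * Phi s t n m τ - Sc k) := by
      rw [mul_inv]
      have hre : Q τ (Pr - ((2 * k + 1 : ℕ) : ℝ) / 2)
          * ((Q τ (-(((2*k+1:ℕ) : ℝ) / 2)))⁻¹ * (QN k - 1)⁻¹
            * (Q τ (-Pr) * (-(((3*k^2+3*k+1 : ℕ) : ℂ)) * Phi s t n m τ - Sc k)))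
          = (Q τ (Pr - ((2 * k + 1 : ℕ) : ℝ) / 2) * Q τ (-Pr))
              * (Q τ (-(((2*k+1:ℕ) : ℝ) / 2)))⁻¹
            * ((QN k - 1)⁻¹ * (-(((3*k^2+3*k+1 : ℕ) : ℂ)) * Phi s t n m τ - Sc k)) := by
        ring
      rw [hre, hQQ, mul_inv_cancel₀ hQnz1, one_mul]
    rw [expand]
    have hgoal : (QN k - 1)⁻¹ * (-(((3*k^2+3*k+1 : ℕ) : ℂ)) * Phi s t n m τ - Sc k)
        - ((3*k^2+3*k+1 : ℕ) : ℂ) * Phi s t n m τ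
        = (QN k - 1)⁻¹ * ((-(((3*k^2+3*k+1 : ℕ) : ℂ)) * Phi s t n m τ - Sc k)
            - (QN k - 1) * (((3*k^2+3*k+1 : ℕ) : ℂ) * Phi s t n m τ)) := by
      field_simp
    rw [hgoal]
    congr 1
    ring
  -- limits
  have hq1 : ‖Q τ 1‖ < 1 := norm_Q_lt_one hτ one_pos
  have hcomp : Tendsto (fun k : ℕ => 2*k+1) atTop atTop :=
    Filter.tendsto_atTop_atTop.mpr fun b => ⟨b, fun a ha => by omega⟩
  have hQN0 : Tendsto QN atTop (nhds 0) := by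
    have h1 : Tendsto (fun nn : ℕ => (Q τ 1)^nn) atTop (nhds 0) :=
      tendsto_pow_atTop_nhds_zero_of_norm_lt_one hq1
    have h2 := h1.comp hcomp
    refine h2.congr fun k => ?_
    simp only [Function.comp_apply, hQN]
    exact (Q_nat_pow τ (2*k+1)).symm
  have hTQN : Tendsto (fun k : ℕ => ((3*k^2+3*k+1 : ℕ) : ℂ) * QN k) atTop (nhds 0) := by
    have hgeo : Summable fun nn : ℕ => (nn:ℝ)^2 * ‖Q τ 1‖^nn :=
      summable_pow_mul_geometric_of_norm_lt_one 2 (by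
        rw [Real.norm_eq_abs, _root_.abs_of_nonneg (norm_nonneg _)]
        exact hq1)
    have h0 : Tendsto (fun nn : ℕ => (nn:ℝ)^2 * ‖Q τ 1‖^nn) atTop (nhds 0) :=
      hgeo.tendsto_atTop_zero
    have h1 := h0.comp hcomp
    refine squeeze_zero_norm (fun k => ?_) h1
    simp only [Function.comp_apply]
    rw [norm_mul]
    have e1 : ‖QN k‖ = ‖Q τ 1‖^(2*k+1) := by
      rw [show QN k = Q τ (((2*k+1 : ℕ) : ℝ)) from rfl, Q_nat_pow τ (2*k+1), norm_pow]
    have e2 : ‖((3*k^2+3*k+1 : ℕ) : ℂ)‖ = ((3*k^2+3*k+1 : ℕ) : ℝ) := by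
      rw [Complex.norm_natCast]
    rw [e1, e2]
    have e3 : ((3*k^2+3*k+1 : ℕ) : ℝ) ≤ ((2*k+1 : ℕ):ℝ)^2 := by
      push_cast
      nlinarith [sq_nonneg ((k:ℝ))]
    have e4 : (0:ℝ) ≤ ‖Q τ 1‖^(2*k+1) := by positivity
    push_cast
    nlinarith [e3, e4]
  have hScL : Tendsto Sc atTop (nhds L) := by
    rw [hL, hSc]
    refine tendsto_tsum_of_dominated_convergence hbound (fun r => ?_) ?_
    · refine Tendsto.congr' ?_ (tendsto_const_nhds (x := (r:ℂ)^2 * ψ r))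
      filter_upwards [eventually_ge_atTop r.natAbs] with k hk
      have habs : |r| ≤ (k:ℤ)+1 := by
        simp only [Int.abs_eq_natAbs]
        omega
      have hre := cN_eq' k r habs
      rw [hre]
      push_cast
      ring
    · exact Eventually.of_forall fun k r => hnormle k r
  -- final combination
  have hmain : Tendsto (fun k : ℕ =>
      (QN k - 1)⁻¹ * (-(Sc k) - ((3*k^2+3*k+1 : ℕ) : ℂ) * QN k * Phi s t n m τ))
      atTop (nhds L) := by
    have hinv : Tendsto (fun k : ℕ => (QN k - 1)⁻¹) atTop (nhds (-1)) := by
      have h := (hQN0.sub_const 1).inv₀ (by norm_num)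
      simpa [inv_neg] using h
    have hsec : Tendsto (fun k : ℕ =>
        -(Sc k) - ((3*k^2+3*k+1 : ℕ) : ℂ) * QN k * Phi s t n m τ) atTop (nhds (-L)) := by
      have h2 : Tendsto (fun k : ℕ => ((3*k^2+3*k+1 : ℕ) : ℂ) * QN k * Phi s t n m τ)
          atTop (nhds 0) := by
        simpa using hTQN.mul_const (Phi s t n m τ)
      simpa using (hScL.neg).sub h2
    have := hinv.mul hsec
    simpa using this
  exact hmain.congr fun k => (key k).symm
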